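/- Let γ > 0 and k > 0 be real constants, and let p : ℝ → ℝ be differentiable with p′(t) = −γ·p(t) + k·p(t)·(1 − p(t)) for all t ≥ 0. If p(0) ∈ (0,1], then p(t) converges to max(0, 1 − γ/k) as t → ∞. -/

import Mathlib

open Set Filter Topology

/-- Starting from any `p(0) ∈ (0,1]`, the belief converges to `max(0, 1 - γ/k)` as `t → ∞`. -/
theorem belief_ode_asymptotics
    (γ k : ℝ) (hγ : 0 < γ) (hk : 0 < k) (p : ℝ → ℝ)
    (hode : ∀ t : ℝ, 0 ≤ t → HasDerivAt p (-γ * p t + k * p t * (1 - p t)) t)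
    (h0 : p 0 ∈ Set.Ioc (0 : ℝ) 1) :
    Tendsto p atTop (𝓝 (max 0 (1 - γ / k))) := by
  obtain ⟨h0pos, h0le⟩ := h0
  have hcont : ContinuousOn p (Ici 0) := fun t ht =>
    (hode t ht).continuousAt.continuousWithinAt
  have hderiv : ∀ t, 0 ≤ t → deriv p t = -γ * p t + k * p t * (1 - p t) :=
    fun t ht => (hode t ht).deriv
  -- Claim A : p stays ≤ 1
  have hle1 : ∀ t, 0 ≤ t → p t ≤ 1 := by
    intro t1 ht1
    by_contra hgt
    push_neg at hgt
    set S : Set ℝ := Icc (0:ℝ) t1 ∩ p ⁻¹' Iic 1 with hSdef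
    have hS0 : (0:ℝ) ∈ S := ⟨⟨le_refl 0, ht1⟩, h0le⟩
    have hSclosed : IsClosed S :=
      (hcont.mono (Icc_subset_Ici_self)).preimage_isClosed_of_isClosed
        isClosed_Icc isClosed_Iic
    have hScomp : IsCompact S :=
      isCompact_Icc.of_isClosed_subset hSclosed (fun t ht => ht.1)
    set s := sSup S with hs
    have hsmem : s ∈ S := hScomp.sSup_mem ⟨0, hS0⟩
    have hs0 : 0 ≤ s := hsmem.1.1
    have hst1 : s < t1 := by
      rcases lt_or_eq_of_le hsmem.1.2 with h | h
      · exact h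
      · exact absurd hsmem.2 (by simp [h]; linarith)
    have hgt1 : ∀ t, t ∈ Ioc s t1 → 1 < p t := by
      intro t ht
      by_contra hle
      push_neg at hle
      have : t ∈ S := ⟨⟨hs0.trans ht.1.le, ht.2⟩, hle⟩
      exact absurd (le_csSup hScomp.bddAbove this) (not_le.mpr ht.1)
    have hanti : StrictAntiOn p (Icc s t1) := by
      apply strictAntiOn_of_deriv_neg (convex_Icc s t1)
        (hcont.mono (fun x hx => hs0.trans hx.1))
      intro x hx
      rw [interior_Icc] at hx
      have hx0 : 0 ≤ x := hs0.trans hx.1.le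
      have hpx : 1 < p x := hgt1 x ⟨hx.1, hx.2.le⟩
      rw [hderiv x hx0]
      have h1 : 0 < p x := lt_trans one_pos hpx
      nlinarith [mul_pos hγ h1,
        mul_nonneg (mul_nonneg hk.le h1.le) (by linarith : (0:ℝ) ≤ p x - 1)]
    have := hanti (left_mem_Icc.mpr hst1.le) (right_mem_Icc.mpr hst1.le) hst1
    have : p t1 < p s := this
    have : p s ≤ 1 := hsmem.2
    linarith
  -- Claim B : p stays > 0
  have hpos : ∀ t, 0 ≤ t → 0 < p t := by
    intro t1 ht1
    by_contra hle
    push_neg at hle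
    set S : Set ℝ := Icc (0:ℝ) t1 ∩ p ⁻¹' Iic 0 with hSdef
    have hSt1 : t1 ∈ S := ⟨⟨ht1, le_refl t1⟩, hle⟩
    have hSclosed : IsClosed S :=
      (hcont.mono (Icc_subset_Ici_self)).preimage_isClosed_of_isClosed
        isClosed_Icc isClosed_Iic
    have hScomp : IsCompact S :=
      isCompact_Icc.of_isClosed_subset hSclosed (fun t ht => ht.1)
    set s := sInf S with hs
    have hsmem : s ∈ S := hScomp.sInf_mem ⟨t1, hSt1⟩
    have hs0 : 0 ≤ s := hsmem.1.1
    have hposlt : ∀ t, t ∈ Ico 0 s → 0 < p t := by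
      intro t ht
      by_contra hle'
      push_neg at hle'
      have : t ∈ S := ⟨⟨ht.1, ht.2.le.trans hsmem.1.2⟩, hle'⟩
      exact absurd (csInf_le hScomp.bddBelow this) (not_le.mpr ht.2)
    -- h t = p t * exp (γ t) is monotone on [0, s]
    have hexp : ∀ x : ℝ, HasDerivAt (fun t => Real.exp (γ * t)) (Real.exp (γ * x) * (γ * 1)) x :=
      fun x => ((hasDerivAt_id x).const_mul γ).exp
    have hmono : MonotoneOn (fun t => p t * Real.exp (γ * t)) (Icc 0 s) := by
      apply monotoneOn_of_hasDerivWithinAt_nonneg (f' := fun t =>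
        (-γ * p t + k * p t * (1 - p t)) * Real.exp (γ * t) + p t * (Real.exp (γ * t) * (γ * 1)))
        (convex_Icc 0 s)
      · exact ((hcont.mono (fun x hx => hx.1)).mul
          (Real.continuous_exp.comp (continuous_const.mul continuous_id)).continuousOn)
      · intro x hx
        rw [interior_Icc] at hx
        exact (((hode x hx.1.le).mul (hexp x))).hasDerivWithinAt
      · intro x hx
        rw [interior_Icc] at hx
        have hpx : 0 < p x := hposlt x ⟨hx.1.le, hx.2⟩
        have hpx1 : p x ≤ 1 := hle1 x hx.1.le
        have he : 0 < Real.exp (γ * x) := Real.exp_pos _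
        have : (-γ * p x + k * p x * (1 - p x)) * Real.exp (γ * x)
            + p x * (Real.exp (γ * x) * (γ * 1)) = (k * p x * (1 - p x)) * Real.exp (γ * x) := by
          ring
        rw [this]
        have : 0 ≤ k * p x * (1 - p x) :=
          mul_nonneg (mul_nonneg hk.le hpx.le) (sub_nonneg.mpr hpx1)
        positivity
    have hs_in : s ∈ Icc (0:ℝ) s := right_mem_Icc.mpr hs0
    have h0_in : (0:ℝ) ∈ Icc (0:ℝ) s := left_mem_Icc.mpr hs0
    have := hmono h0_in hs_in hs0
    simp only [mul_zero, Real.exp_zero, mul_one] at this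
    have hps : p s ≤ 0 := hsmem.2
    nlinarith [Real.exp_pos (γ * s)]
  -- The reciprocal u = 1/p satisfies the linear ODE u' = (γ - k) u + k on [0,∞)
  set u : ℝ → ℝ := fun t => (p t)⁻¹ with hu
  have hune : ∀ t, 0 ≤ t → p t ≠ 0 := fun t ht => (hpos t ht).ne'
  have hupos : ∀ t, 0 ≤ t → 0 < u t := fun t ht => inv_pos.mpr (hpos t ht)
  have hude : ∀ t, 0 ≤ t → HasDerivAt u ((γ - k) * u t + k) t := by
    intro t ht
    have hne := hune t ht
    have h1 := (hode t ht).inv hne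
    have : -(-γ * p t + k * p t * (1 - p t)) / p t ^ 2 = (γ - k) * (p t)⁻¹ + k := by
      field_simp
      ring
    rw [this] at h1
    exact h1
  have hucont : ContinuousOn u (Ici 0) := fun t ht =>
    ((hude t ht).continuousAt).continuousWithinAt
  have hpeq : ∀ᶠ t in atTop, (u t)⁻¹ = p t := by
    filter_upwards [eventually_ge_atTop (0:ℝ)] with t ht
    simp [hu, inv_inv]
  rcases lt_or_ge γ k with hγk | hγk
  · -- γ < k : limit is 1 - γ/k > 0
    set L : ℝ := k / (k - γ) with hL
    have hkγ' : 0 < k - γ := by linarith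
    have hLpos : 0 < L := div_pos hk hkγ'
    -- w t = (u t - L) * exp ((k - γ) t) is constant
    have hconst : ∀ t, 0 ≤ t → (u t - L) * Real.exp ((k - γ) * t) = u 0 - L := by
      intro t ht
      have hcc : ContinuousOn (fun t => (u t - L) * Real.exp ((k - γ) * t)) (Icc 0 t) :=
        (((hucont.mono Icc_subset_Ici_self).sub continuousOn_const).mul
          (Real.continuous_exp.comp (continuous_const.mul continuous_id)).continuousOn)
      have hd : ∀ x ∈ Ico (0:ℝ) t, HasDerivWithinAt
          (fun t => (u t - L) * Real.exp ((k - γ) * t)) 0 (Ici x) x := by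
        intro x hx
        have hex : HasDerivAt (fun t => Real.exp ((k - γ) * t))
            (Real.exp ((k - γ) * x) * ((k - γ) * 1)) x :=
          ((hasDerivAt_id x).const_mul (k - γ)).exp
        have hD := (((hude x hx.1).sub_const L).mul hex)
        have hL2 : (k - γ) * L = k := by rw [hL]; field_simp
        have heq : ((γ - k) * u x + k) * Real.exp ((k - γ) * x)
            + (u x - L) * (Real.exp ((k - γ) * x) * ((k - γ) * 1)) = 0 := by
          linear_combination (-Real.exp ((k - γ) * x)) * hL2
        rw [heq] at hD
        exact hD.hasDerivWithinAt
      have := constant_of_has_deriv_right_zero hcc hd t (right_mem_Icc.mpr ht)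
      simpa using this
    have huform : ∀ t, 0 ≤ t → u t = L + (u 0 - L) * Real.exp (-((k - γ) * t)) := by
      intro t ht
      have h1 := hconst t ht
      have he : Real.exp ((k - γ) * t) ≠ 0 := (Real.exp_pos _).ne'
      rw [Real.exp_neg, ← h1, mul_inv_cancel_right₀ he]
      ring
    have hulim : Tendsto u atTop (𝓝 L) := by
      have h2 : Tendsto (fun t : ℝ => -((k - γ) * t)) atTop atBot :=
        tendsto_neg_atTop_atBot.comp (Tendsto.const_mul_atTop hkγ' tendsto_id)
      have h3 : Tendsto (fun t : ℝ => Real.exp (-((k - γ) * t))) atTop (𝓝 0) :=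
        Real.tendsto_exp_atBot.comp h2
      have h1 : Tendsto (fun t : ℝ => L + (u 0 - L) * Real.exp (-((k - γ) * t)))
          atTop (𝓝 (L + (u 0 - L) * 0)) :=
        tendsto_const_nhds.add (tendsto_const_nhds.mul h3)
      rw [mul_zero, add_zero] at h1
      refine Tendsto.congr' ?_ h1
      filter_upwards [eventually_ge_atTop (0:ℝ)] with t ht
      exact (huform t ht).symm
    have hLinv : L⁻¹ = 1 - γ / k := by
      rw [hL]
      field_simp
    have hmax : max 0 (1 - γ / k) = 1 - γ / k := by
      apply max_eq_right
      rw [← hLinv]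
      exact inv_nonneg.mpr hLpos.le
    rw [hmax, ← hLinv]
    exact Tendsto.congr' hpeq (hulim.inv₀ hLpos.ne')
  · -- k ≤ γ : limit is 0
    have hmax : max 0 (1 - γ / k) = 0 := by
      apply max_eq_left
      have : 1 ≤ γ / k := (one_le_div hk).mpr hγk
      linarith
    rw [hmax]
    -- u t - k t is monotone on [0,∞), so u t ≥ u 0 + k t → ∞
    have hmono : MonotoneOn (fun t => u t - k * t) (Ici 0) := by
      apply monotoneOn_of_hasDerivWithinAt_nonneg (f' := fun t => (γ - k) * u t)
        (convex_Ici 0)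
      · exact hucont.sub (continuous_const.mul continuous_id).continuousOn
      · intro x hx
        rw [interior_Ici] at hx
        have := (hude x hx.le).sub ((hasDerivAt_id x).const_mul k)
        exact (this.congr_deriv (by ring)).hasDerivWithinAt
      · intro x hx
        rw [interior_Ici] at hx
        have := hupos x hx.le
        have : 0 ≤ γ - k := by linarith
        nlinarith [hupos x hx.le]
    have hbound : ∀ t, 0 ≤ t → u 0 + k * t ≤ u t := by
      intro t ht
      have := hmono (mem_Ici.mpr le_rfl) (mem_Ici.mpr ht) ht
      simp only [mul_zero, sub_zero] at this
      linarith
    have hutop : Tendsto u atTop atTop := by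
      apply tendsto_atTop_mono' _ _ (tendsto_atTop_add_const_left _ (u 0)
        (Tendsto.const_mul_atTop hk tendsto_id))
      filter_upwards [eventually_ge_atTop (0:ℝ)] with t ht
      exact hbound t ht
    exact Tendsto.congr' hpeq hutop.inv_tendsto_atTop
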